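/- Let G be a group and x_1, ..., x_n elements of G such that x_i and x_j commute whenever j - i ≥ 2. If (y_1, ..., y_n) is any permutation of the tuple (x_1, ..., x_n), then there exists an element u in the subgroup of G generated by x_1, ..., x_{n-1} such that u * (y_1 * ... * y_n) * u⁻¹ = x_1 * ... * x_n. -/

import Mathlib

private lemma aux0 {G : Type*} [Group G] : ∀ (n : ℕ) (x : Fin n → G)
    (_ : ∀ i j : Fin n, (i : ℕ) + 2 ≤ (j : ℕ) → Commute (x i) (x j))
    (l : List G) (_ : l.Perm (List.ofFn x)),
    ∃ u ∈ Subgroup.closure {g : G | ∃ i : Fin n, (i : ℕ) + 1 < n ∧ g = x i},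
      u * l.prod * u⁻¹ = (List.ofFn x).prod := by
  intro n
  induction n with
  | zero =>
    intro x _ l hl
    refine ⟨1, Subgroup.one_mem _, ?_⟩
    rw [List.ofFn_zero] at hl ⊢
    rw [hl.eq_nil]
    simp
  | succ n ih =>
    intro x hcomm l hl
    set t := x (Fin.last n) with ht
    set x' : Fin n → G := fun i => x i.castSucc with hx'
    have hsplit : List.ofFn x = (List.ofFn x') ++ [t] := by
      rw [List.ofFn_succ', List.concat_eq_append]
    have htl : t ∈ l := hl.mem_iff.mpr (by
      rw [List.mem_ofFn]; exact ⟨Fin.last n, rfl⟩)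
    obtain ⟨A, B, rfl⟩ := List.append_of_mem htl
    have hAB : (B ++ A).Perm (List.ofFn x') := by
      have h1 : (t :: (A ++ B)).Perm (t :: List.ofFn x') := by
        refine (List.perm_middle.symm.trans hl).trans ?_
        rw [hsplit]
        exact List.perm_append_comm
      exact (List.perm_append_comm.trans ((List.perm_cons t).mp h1))
    have hcomm' : ∀ i j : Fin n, (i : ℕ) + 2 ≤ (j : ℕ) → Commute (x' i) (x' j) := by
      intro i j hij
      exact hcomm i.castSucc j.castSucc (by simpa using hij)
    obtain ⟨u', hu'mem, hu'⟩ := ih x' hcomm' (B ++ A) hAB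
    set S : Set G := {g : G | ∃ i : Fin (n + 1), (i : ℕ) + 1 < n + 1 ∧ g = x i} with hS
    have hsub : {g : G | ∃ i : Fin n, (i : ℕ) + 1 < n ∧ g = x' i} ⊆ S := by
      rintro g ⟨i, hi, rfl⟩
      exact ⟨i.castSucc, by simpa using Nat.lt_succ_of_lt hi, rfl⟩
    have hu'S : u' ∈ Subgroup.closure S := Subgroup.closure_mono hsub hu'mem
    have hcommut : Commute u' t := by
      refine Subgroup.closure_induction (fun g hg => ?_) (Commute.one_left t)
        (fun a b _ _ ha hb => ha.mul_left hb) (fun a _ ha => ha.inv_left) hu'mem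
      obtain ⟨i, hi, rfl⟩ := hg
      exact hcomm i.castSucc (Fin.last n) (by simp; omega)
    have hBS : B.prod ∈ Subgroup.closure S := by
      refine Subgroup.list_prod_mem _ (fun g hg => Subgroup.subset_closure ?_)
      have : g ∈ List.ofFn x' := hAB.mem_iff.mp (by simp [hg])
      obtain ⟨i, rfl⟩ := List.mem_ofFn.mp this
      exact ⟨i.castSucc, by simp [Nat.lt_succ_iff, Nat.succ_le_of_lt i.isLt], rfl⟩
    refine ⟨u' * B.prod, Subgroup.mul_mem _ hu'S hBS, ?_⟩
    have e1 : (A ++ t :: B).prod = A.prod * (t * B.prod) := by simp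
    have e2 : (B ++ A).prod = B.prod * A.prod := by simp
    have key : u' * B.prod * (A ++ t :: B).prod * (u' * B.prod)⁻¹
        = (u' * (B ++ A).prod * u'⁻¹) * t := by
      rw [e1, e2, mul_inv_rev]
      have h3 : t * u'⁻¹ = u'⁻¹ * t := hcommut.inv_left.eq.symm
      calc u' * B.prod * (A.prod * (t * B.prod)) * (B.prod⁻¹ * u'⁻¹)
          = u' * (B.prod * A.prod) * t * (B.prod * B.prod⁻¹) * u'⁻¹ := by
            simp [mul_assoc]
        _ = u' * (B.prod * A.prod) * (t * u'⁻¹) := by simp [mul_assoc]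
        _ = u' * (B.prod * A.prod) * (u'⁻¹ * t) := by rw [h3]
        _ = u' * (B.prod * A.prod) * u'⁻¹ * t := by simp [mul_assoc]
    rw [key, hu', hsplit]
    simp

/- STATEMENT 0: Lemma 4.7. G a group, x_1,...,x_n with x_i x_j = x_j x_i when j - i ≥ 2.
   If (y_1,...,y_n) is a permutation of (x_1,...,x_n), there is u in the subgroup generated
   by x_1,...,x_{n-1} with u (y_1 ⋯ y_n) u⁻¹ = x_1 ⋯ x_n. -/
theorem stmt0 {G : Type*} [Group G] (n : ℕ) (x : Fin n → G)
    (hcomm : ∀ i j : Fin n, (i : ℕ) + 2 ≤ (j : ℕ) → Commute (x i) (x j))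
    (σ : Equiv.Perm (Fin n)) :
    ∃ u ∈ Subgroup.closure {g : G | ∃ i : Fin n, (i : ℕ) + 1 < n ∧ g = x i},
      u * (List.ofFn fun k => x (σ k)).prod * u⁻¹ = (List.ofFn x).prod := by
  exact aux0 n x hcomm _ (σ.ofFn_comp_perm x)
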